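/- Let n ≥ 2. For every w ∈ S_∞^(n) with w ∉ S_n (i.e. w(j) ≠ j for some j > n), the Schubert polynomial 𝔖_w lies in the ideal I of ℤ[x_1,…,x_n] generated by the symmetric polynomials of positive degree. -/

import Mathlib

open MvPolynomial

/-- The length (number of inversions) of a finitely-supported permutation of `ℕ`. -/
noncomputable def permLenN (w : Equiv.Perm ℕ) : ℕ :=
  Set.ncard {p : ℕ × ℕ | p.1 < p.2 ∧ w p.2 < w p.1}

/-- `w ∈ S_∞^(n)` (0-indexed positions and values): `w` is a permutation of `ℕ`
moving only finitely many points and increasing on positions `≥ n` (1-indexed: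
`w(n+1) < w(n+2) < ⋯`). -/
def SInf (n : ℕ) (w : Equiv.Perm ℕ) : Prop :=
  {i | w i ≠ i}.Finite ∧ ∀ i, n ≤ i → w i < w (i + 1)

/-- The ideal of `ℤ[x_1,…,x_n]` generated by the symmetric polynomials of positive
degree, equivalently by the elementary symmetric polynomials `e_1, …, e_n`. -/
noncomputable def symIdeal (n : ℕ) : Ideal (MvPolynomial (Fin n) ℤ) :=
  Ideal.span {f | ∃ k : ℕ, 0 < k ∧ k ≤ n ∧ f = MvPolynomial.esymm (Fin n) ℤ k}

/-! ### Auxiliary algebraic lemmas -/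

lemma dvd_sub_rename_swap {n : ℕ} (i j : Fin n) (f : MvPolynomial (Fin n) ℤ) :
    (X i - X j) ∣ (f - rename (Equiv.swap i j) f) := by
  induction f using MvPolynomial.induction_on with
  | C a => simp
  | add p q hp hq =>
      have h := dvd_add hp hq
      convert h using 1
      rw [map_add]; ring
  | mul_X p k hp =>
      rw [map_mul, rename_X]
      have h1 : p * X k - rename (Equiv.swap i j) p * X (Equiv.swap i j k)
          = (p - rename (Equiv.swap i j) p) * X k
            + rename (Equiv.swap i j) p * (X k - X (Equiv.swap i j k)) := by ring
      rw [h1]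
      refine dvd_add (Dvd.dvd.mul_right hp _) (Dvd.dvd.mul_left ?_ _)
      rcases eq_or_ne k i with rfl | hki
      · rw [Equiv.swap_apply_left]
      rcases eq_or_ne k j with rfl | hkj
      · rw [Equiv.swap_apply_right]
        exact (dvd_neg).mpr dvd_rfl |>.trans (by rw [neg_sub])
      · rw [Equiv.swap_apply_of_ne_of_ne hki hkj]; simp

lemma symIdeal_rename {n : ℕ} (e : Fin n ≃ Fin n) {g : MvPolynomial (Fin n) ℤ}
    (hg : g ∈ symIdeal n) : rename e g ∈ symIdeal n := by
  refine Submodule.span_induction ?_ ?_ ?_ ?_ hg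
  · rintro x ⟨k, hk0, hkn, rfl⟩
    rw [rename_esymm]
    exact Ideal.subset_span ⟨k, hk0, hkn, rfl⟩
  · simp
  · intro x y _ _ hx hy
    rw [map_add]; exact Ideal.add_mem _ hx hy
  · intro a x _ hx
    rw [smul_eq_mul, map_mul]
    exact Ideal.mul_mem_left _ _ hx

lemma exists_quot {n : ℕ} (i j : Fin n) {g : MvPolynomial (Fin n) ℤ}
    (hg : g ∈ symIdeal n) :
    ∃ h ∈ symIdeal n, g - rename (Equiv.swap i j) g = (X i - X j) * h := by
  refine Submodule.span_induction ?_ ?_ ?_ ?_ hg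
  · rintro x ⟨k, hk0, hkn, rfl⟩
    exact ⟨0, Ideal.zero_mem _, by rw [rename_esymm]; ring⟩
  · exact ⟨0, Ideal.zero_mem _, by simp⟩
  · rintro x y hxm hym ⟨h1, h1I, he1⟩ ⟨h2, h2I, he2⟩
    refine ⟨h1 + h2, Ideal.add_mem _ h1I h2I, ?_⟩
    rw [map_add]
    calc x + y - (rename (Equiv.swap i j) x + rename (Equiv.swap i j) y)
        = (x - rename (Equiv.swap i j) x) + (y - rename (Equiv.swap i j) y) := by ring
      _ = (X i - X j) * (h1 + h2) := by rw [he1, he2]; ring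
  · rintro a x hxm ⟨h, hI, he⟩
    obtain ⟨q, hq⟩ := dvd_sub_rename_swap i j a
    refine ⟨a * h + q * rename (Equiv.swap i j) x,
      Ideal.add_mem _ (Ideal.mul_mem_left _ _ hI)
        (Ideal.mul_mem_left _ _ (symIdeal_rename _ hxm)), ?_⟩
    rw [smul_eq_mul, map_mul]
    calc a * x - rename (Equiv.swap i j) a * rename (Equiv.swap i j) x
        = a * (x - rename (Equiv.swap i j) x)
          + (a - rename (Equiv.swap i j) a) * rename (Equiv.swap i j) x := by ring
      _ = (X i - X j) * (a * h + q * rename (Equiv.swap i j) x) := by rw [he, hq]; ring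

lemma X_pow_mem {n : ℕ} (hn : 0 < n) :
    (X (⟨0, hn⟩ : Fin n) : MvPolynomial (Fin n) ℤ) ^ n ∈ symIdeal n := by
  set x0 : MvPolynomial (Fin n) ℤ := X (⟨0, hn⟩ : Fin n) with hx0
  have key := MvPolynomial.prod_C_add_X_eq_sum_esymm ℤ (Fin n)
  have h0 := congrArg (Polynomial.eval (-x0)) key
  rw [Polynomial.eval_prod] at h0
  rw [Finset.prod_eq_zero (Finset.mem_univ (⟨0, hn⟩ : Fin n))
    (by simp [x0])] at h0
  rw [Polynomial.eval_finset_sum] at h0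
  simp only [Polynomial.eval_mul, Polynomial.eval_C, Polynomial.eval_pow,
    Polynomial.eval_X, Fintype.card_fin] at h0
  rw [Finset.sum_range_succ'] at h0
  simp only [esymm_zero, one_mul, Nat.sub_zero] at h0
  have hS : (∑ k ∈ Finset.range n, esymm (Fin n) ℤ (k + 1) * (-x0) ^ (n - (k + 1)))
      ∈ symIdeal n := by
    refine Ideal.sum_mem _ fun k hk => ?_
    refine Ideal.mul_mem_right _ _ (Ideal.subset_span ?_)
    exact ⟨k + 1, Nat.succ_pos k, by simpa using Finset.mem_range.mp hk, rfl⟩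
  have h1 : (-x0) ^ n ∈ symIdeal n := by
    rw [eq_neg_of_add_eq_zero_right h0.symm]
    exact neg_mem hS
  rcases Nat.even_or_odd n with he | ho
  · rwa [he.neg_pow] at h1
  · rw [ho.neg_pow] at h1
    have := neg_mem h1
    rwa [neg_neg] at this

lemma dominant_mem {n : ℕ} (hn : 0 < n) {w : Equiv.Perm ℕ}
    (hbig : ∃ i : ℕ, i < n ∧ n ≤ w i)
    (hdesc : ∀ i : ℕ, i + 1 < n → w (i + 1) < w i) :
    (∏ i : Fin n, (X i : MvPolynomial (Fin n) ℤ) ^ (w (i : ℕ))) ∈ symIdeal n := by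
  have hle : ∀ k : ℕ, k < n → w k ≤ w 0 := by
    intro k
    induction k with
    | zero => intro _; exact le_rfl
    | succ k ih => intro hk; exact le_trans (le_of_lt (hdesc k hk)) (ih (by omega))
  obtain ⟨i, hi, hwi⟩ := hbig
  have h0 : n ≤ w 0 := le_trans hwi (hle i hi)
  have hdvd : (X (⟨0, hn⟩ : Fin n) : MvPolynomial (Fin n) ℤ) ^ n ∣
      ∏ i : Fin n, (X i : MvPolynomial (Fin n) ℤ) ^ (w (i : ℕ)) := by
    refine dvd_trans (pow_dvd_pow _ h0) ?_
    exact Finset.dvd_prod_of_mem (fun i : Fin n => (X i : MvPolynomial (Fin n) ℤ) ^ (w (i : ℕ)))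
      (Finset.mem_univ (⟨0, hn⟩ : Fin n))
  obtain ⟨c, hc⟩ := hdvd
  rw [hc]
  exact Ideal.mul_mem_right _ _ (X_pow_mem hn)

/-! ### Auxiliary combinatorial lemmas -/

lemma exists_bound {w : Equiv.Perm ℕ} (hf : {i | w i ≠ i}.Finite) :
    ∃ N, ∀ k, N ≤ k → w k = k := by
  obtain ⟨N, hN⟩ := hf.bddAbove
  refine ⟨N + 1, fun k hk => ?_⟩
  by_contra h
  have := hN (Set.mem_setOf.mpr h)
  omega

lemma finite_invSet {w : Equiv.Perm ℕ} (hf : {i | w i ≠ i}.Finite) :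
    {p : ℕ × ℕ | p.1 < p.2 ∧ w p.2 < w p.1}.Finite := by
  obtain ⟨N, hN⟩ := exists_bound hf
  have hlt : ∀ k, k < N → w k < N := by
    intro k hk
    by_contra h
    push_neg at h
    have h2 : w (w k) = w k := hN _ h
    have := w.injective h2
    omega
  apply Set.Finite.subset ((Set.finite_Iio N).prod (Set.finite_Iio N))
  rintro ⟨p, q⟩ ⟨h1, h2⟩
  dsimp only at h1 h2
  simp only [Set.mem_prod, Set.mem_Iio]
  rcases lt_or_ge q N with hq | hq
  · exact ⟨lt_trans h1 hq, hq⟩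
  · exfalso
    rw [hN q hq] at h2
    rcases lt_or_ge p N with hp | hp
    · have := hlt p hp; omega
    · rw [hN p hp] at h2; omega

lemma swap_lt {i p q : ℕ} (h1 : p < q) (h2 : ¬(p = i ∧ q = i + 1)) :
    Equiv.swap i (i + 1) p < Equiv.swap i (i + 1) q := by
  simp only [Equiv.swap_apply_def]
  split_ifs <;> omega

lemma support_mul_swap {w : Equiv.Perm ℕ} (hf : {i | w i ≠ i}.Finite) (i : ℕ) :
    {k | (w * Equiv.swap i (i + 1)) k ≠ k}.Finite := by
  apply Set.Finite.subset (hf.union ((Set.finite_singleton (i + 1)).insert i))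
  intro k hk
  by_cases h : k = i ∨ k = i + 1
  · right; simpa using h
  · push_neg at h
    left
    rw [Set.mem_setOf]
    rw [Set.mem_setOf, Equiv.Perm.mul_apply, Equiv.swap_apply_of_ne_of_ne h.1 h.2] at hk
    exact hk

lemma permLenN_lt {w : Equiv.Perm ℕ} (hf : {i | w i ≠ i}.Finite) {i : ℕ}
    (hasc : w i < w (i + 1)) :
    permLenN w < permLenN (w * Equiv.swap i (i + 1)) := by
  set σ := Equiv.swap i (i + 1) with hσ
  set u := w * σ with hu
  have huk : ∀ k, u k = w (σ k) := fun k => rfl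
  have hufin := support_mul_swap hf i
  have hInvu := finite_invSet hufin
  have hmem : ((i, i + 1) : ℕ × ℕ) ∈ {p : ℕ × ℕ | p.1 < p.2 ∧ u p.2 < u p.1} := by
    constructor
    · exact Nat.lt_succ_self i
    · show u (i + 1) < u i
      rw [huk, huk, hσ, Equiv.swap_apply_left, Equiv.swap_apply_right]
      exact hasc
  have hmaps : ∀ p ∈ {p : ℕ × ℕ | p.1 < p.2 ∧ w p.2 < w p.1},
      (σ p.1, σ p.2) ∈ {p : ℕ × ℕ | p.1 < p.2 ∧ u p.2 < u p.1} \ {(i, i + 1)} := by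
    rintro ⟨p, q⟩ ⟨h1, h2⟩
    dsimp only at h1 h2
    have hne : ¬(p = i ∧ q = i + 1) := by
      rintro ⟨rfl, rfl⟩; omega
    have hlt := swap_lt h1 hne
    refine ⟨⟨hlt, ?_⟩, ?_⟩
    · show u (σ q) < u (σ p)
      rw [huk, huk, hσ, Equiv.swap_apply_self, Equiv.swap_apply_self]
      exact h2
    · simp only [Set.mem_singleton_iff, Prod.mk.injEq, not_and]
      intro hpi hqj
      have hp : p = σ i := by rw [← hpi, hσ, Equiv.swap_apply_self]
      have hq : q = σ (i + 1) := by rw [← hqj, hσ, Equiv.swap_apply_self]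
      rw [hσ, Equiv.swap_apply_left] at hp
      rw [hσ, Equiv.swap_apply_right] at hq
      omega
  have hinj : Set.InjOn (fun p : ℕ × ℕ => (σ p.1, σ p.2))
      {p : ℕ × ℕ | p.1 < p.2 ∧ w p.2 < w p.1} := by
    rintro ⟨a, b⟩ _ ⟨c, d⟩ _ h
    simp only [Prod.mk.injEq] at h
    exact Prod.ext (σ.injective h.1) (σ.injective h.2)
  have h1 : permLenN w ≤ ({p : ℕ × ℕ | p.1 < p.2 ∧ u p.2 < u p.1} \ {(i, i + 1)}).ncard :=
    Set.ncard_le_ncard_of_injOn _ hmaps hinj hInvu.diff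
  have h2 : ({p : ℕ × ℕ | p.1 < p.2 ∧ u p.2 < u p.1} \ {(i, i + 1)}).ncard
      < permLenN u :=
    Set.ncard_diff_singleton_lt_of_mem hmem hInvu
  exact lt_of_le_of_lt h1 h2

/-- number of "ascent pairs" among the first `n` positions -/
def ascCard (n : ℕ) (w : Equiv.Perm ℕ) : ℕ :=
  (Finset.univ.filter fun p : Fin n × Fin n =>
    (p.1 : ℕ) < (p.2 : ℕ) ∧ w (p.1 : ℕ) < w (p.2 : ℕ)).card

lemma SInf_mul_swap {n : ℕ} {w : Equiv.Perm ℕ} (hw : SInf n w) {i : ℕ} (hin : i + 1 < n) :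
    SInf n (w * Equiv.swap i (i + 1)) := by
  refine ⟨support_mul_swap hw.1 i, fun k hk => ?_⟩
  have h1 : k ≠ i ∧ k ≠ i + 1 ∧ k + 1 ≠ i ∧ k + 1 ≠ i + 1 := by omega
  rw [Equiv.Perm.mul_apply, Equiv.Perm.mul_apply,
    Equiv.swap_apply_of_ne_of_ne h1.1 h1.2.1, Equiv.swap_apply_of_ne_of_ne h1.2.2.1 h1.2.2.2]
  exact hw.2 k hk

lemma ascCard_lt {n : ℕ} {w : Equiv.Perm ℕ} (i j : Fin n) (hj : (j : ℕ) = (i : ℕ) + 1)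
    (hasc : w (i : ℕ) < w (j : ℕ)) :
    ascCard n (w * Equiv.swap (i : ℕ) (j : ℕ)) < ascCard n w := by
  set σn := Equiv.swap (i : ℕ) (j : ℕ) with hσn
  set u := w * σn with hu
  have huk : ∀ k, u k = w (σn k) := fun k => rfl
  set σF := Equiv.swap i j with hσF
  have hcoe : ∀ k : Fin n, ((σF k : Fin n) : ℕ) = σn (k : ℕ) := by
    intro k
    rw [hσF, hσn]
    exact (Fin.val_injective.swap_apply i j k).symm
  have hswap : ∀ p q : ℕ, p < q → ¬(p = (i : ℕ) ∧ q = (j : ℕ)) → σn p < σn q := by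
    intro p q h1 h2
    rw [hσn, hj]
    rw [hj] at h2
    simp only [Equiv.swap_apply_def]
    split_ifs <;> omega
  have hij : i ≠ j := by intro h; rw [h] at hj; omega
  have hmem : ((i, j) : Fin n × Fin n) ∈ Finset.univ.filter fun p : Fin n × Fin n =>
      (p.1 : ℕ) < (p.2 : ℕ) ∧ w (p.1 : ℕ) < w (p.2 : ℕ) := by
    simp only [Finset.mem_filter, Finset.mem_univ, true_and]
    exact ⟨by omega, hasc⟩
  have hmaps : ∀ p ∈ (Finset.univ.filter fun p : Fin n × Fin n =>
      (p.1 : ℕ) < (p.2 : ℕ) ∧ u (p.1 : ℕ) < u (p.2 : ℕ)),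
      (σF p.1, σF p.2) ∈ ((Finset.univ.filter fun p : Fin n × Fin n =>
      (p.1 : ℕ) < (p.2 : ℕ) ∧ w (p.1 : ℕ) < w (p.2 : ℕ)).erase (i, j)) := by
    rintro ⟨p, q⟩ hpq
    simp only [Finset.mem_filter, Finset.mem_univ, true_and] at hpq
    obtain ⟨h1, h2⟩ := hpq
    dsimp only at h1 h2 ⊢
    have hne : ¬((p : ℕ) = (i : ℕ) ∧ (q : ℕ) = (j : ℕ)) := by
      rintro ⟨hp, hq⟩
      have hp' : p = i := Fin.ext hp
      have hq' : q = j := Fin.ext hq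
      subst hp' hq'
      rw [huk, huk, hσn, Equiv.swap_apply_left, Equiv.swap_apply_right] at h2
      omega
    have hlt := hswap _ _ h1 hne
    rw [Finset.mem_erase]
    constructor
    · intro heq
      rw [Prod.mk.injEq] at heq
      have hp : p = σF i := by rw [← heq.1, hσF, Equiv.swap_apply_self]
      have hq : q = σF j := by rw [← heq.2, hσF, Equiv.swap_apply_self]
      rw [hσF, Equiv.swap_apply_left] at hp
      rw [hσF, Equiv.swap_apply_right] at hq
      subst hp hq
      rw [hj] at h1
      omega
    · simp only [Finset.mem_filter, Finset.mem_univ, true_and]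
      rw [hcoe, hcoe]
      exact ⟨hlt, h2⟩
  have hinj : Set.InjOn (fun p : Fin n × Fin n => (σF p.1, σF p.2))
      ((Finset.univ.filter fun p : Fin n × Fin n =>
      (p.1 : ℕ) < (p.2 : ℕ) ∧ u (p.1 : ℕ) < u (p.2 : ℕ)) : Finset (Fin n × Fin n)) := by
    rintro ⟨a, b⟩ _ ⟨c, d⟩ _ h
    simp only [Prod.mk.injEq] at h
    exact Prod.ext (σF.injective h.1) (σF.injective h.2)
  calc ascCard n u ≤ ((Finset.univ.filter fun p : Fin n × Fin n =>
      (p.1 : ℕ) < (p.2 : ℕ) ∧ w (p.1 : ℕ) < w (p.2 : ℕ)).erase (i, j)).card :=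
        Finset.card_le_card_of_injOn _ hmaps hinj
    _ < ascCard n w := Finset.card_erase_lt_of_mem hmem

lemma exists_big {n : ℕ} {w : Equiv.Perm ℕ} (hw : SInf n w)
    (hwn : ∃ i, n ≤ i ∧ w i ≠ i) : ∃ i : ℕ, i < n ∧ n ≤ w i := by
  by_contra hcon
  push_neg at hcon
  have hsurj : Function.Surjective (fun k : Fin n => (⟨w (k : ℕ), hcon _ k.2⟩ : Fin n)) := by
    apply Finite.injective_iff_surjective.mp
    intro a b hab
    simp only [Fin.mk.injEq] at hab
    exact Fin.ext (w.injective hab)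
  have hge : ∀ k, n ≤ k → n ≤ w k := by
    intro k hk
    by_contra hlt
    push_neg at hlt
    obtain ⟨j, hj⟩ := hsurj ⟨w k, hlt⟩
    simp only [Fin.mk.injEq] at hj
    have := w.injective hj
    omega
  have hgek : ∀ k, n ≤ k → k ≤ w k := by
    intro k hk
    induction k, hk using Nat.le_induction with
    | base => exact hge n le_rfl
    | succ k hk ih =>
        have h1 := hw.2 k hk
        have h2 := ih
        omega
  obtain ⟨j, hj, hjne⟩ := hwn
  have hjgt : j < w j := lt_of_le_of_ne (hgek j hj) (Ne.symm hjne)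
  have hmono : ∀ m, j ≤ m → m + 1 ≤ w m := by
    intro m hm
    induction m, hm using Nat.le_induction with
    | base => exact hjgt
    | succ m hm ih =>
        have h1 := hw.2 m (le_trans hj hm)
        omega
  obtain ⟨N, hN⟩ := exists_bound hw.1
  have h1 := hmono (max j N) (le_max_left _ _)
  have h2 := hN (max j N) (le_max_right _ _)
  omega

/-- for any family `(𝔖_w)_{w ∈ S_∞^(n)}` of polynomials in
`ℤ[x_1,…,x_n]` satisfying the defining laws of Schubert polynomials (the monomial
formula in the dominant case `w(1) > ⋯ > w(n)`, and the divided-difference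
recursion for `1 ≤ i ≤ n-1`), every `w ∈ S_∞^(n) ∖ S_n` has `𝔖_w ∈ I`.
Everything is 0-indexed: position/value `i` stands for `i+1`, the variable `X i`
is `x_{i+1}`, and `w ∉ S_n` means `w i ≠ i` for some `i ≥ n`. -/
theorem stmt1 (n : ℕ) (hn : 2 ≤ n)
    (𝔖 : Equiv.Perm ℕ → MvPolynomial (Fin n) ℤ)
    (hdom : ∀ w : Equiv.Perm ℕ, SInf n w → (∀ i : ℕ, i + 1 < n → w (i + 1) < w i) →
      𝔖 w = ∏ i : Fin n, X i ^ (w (i : ℕ)))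
    (hrec : ∀ w : Equiv.Perm ℕ, SInf n w → ∀ i j : Fin n, (j : ℕ) = (i : ℕ) + 1 →
      permLenN (w * Equiv.swap (i : ℕ) (j : ℕ)) < permLenN w →
      (X i - X j) * 𝔖 (w * Equiv.swap (i : ℕ) (j : ℕ)) =
        𝔖 w - rename (Equiv.swap i j) (𝔖 w))
    (w : Equiv.Perm ℕ) (hw : SInf n w) (hwn : ∃ i, n ≤ i ∧ w i ≠ i) :
    𝔖 w ∈ symIdeal n := by
  suffices H : ∀ m : ℕ, ∀ w : Equiv.Perm ℕ, SInf n w → (∃ i, n ≤ i ∧ w i ≠ i) →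
      ascCard n w ≤ m → 𝔖 w ∈ symIdeal n from H (ascCard n w) w hw hwn le_rfl
  intro m
  induction m with
  | zero =>
      intro w hw hwn hA
      have hdesc : ∀ i : ℕ, i + 1 < n → w (i + 1) < w i := by
        intro i hin
        by_contra hle
        push_neg at hle
        have hasc : w i < w (i + 1) :=
          lt_of_le_of_ne hle (fun h => by have := w.injective h; omega)
        have hmem : ((⟨i, by omega⟩ : Fin n), (⟨i + 1, hin⟩ : Fin n)) ∈
            Finset.univ.filter (fun p : Fin n × Fin n =>
              (p.1 : ℕ) < (p.2 : ℕ) ∧ w (p.1 : ℕ) < w (p.2 : ℕ)) := by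
          simp only [Finset.mem_filter, Finset.mem_univ, true_and]
          exact ⟨Nat.lt_succ_self i, hasc⟩
        have hpos : 0 < ascCard n w := Finset.card_pos.mpr ⟨_, hmem⟩
        omega
      rw [hdom w hw hdesc]
      exact dominant_mem (by omega) (exists_big hw hwn) hdesc
  | succ m ih =>
      intro w hw hwn hA
      by_cases hd : ∀ i : ℕ, i + 1 < n → w (i + 1) < w i
      · rw [hdom w hw hd]
        exact dominant_mem (by omega) (exists_big hw hwn) hd
      · push_neg at hd
        obtain ⟨i, hin, hle⟩ := hd
        have hasc : w i < w (i + 1) :=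
          lt_of_le_of_ne hle (fun h => by have := w.injective h; omega)
        set ii : Fin n := ⟨i, by omega⟩ with hiidef
        set jj : Fin n := ⟨i + 1, hin⟩ with hjjdef
        have hji : (jj : ℕ) = (ii : ℕ) + 1 := rfl
        have hw' : SInf n (w * Equiv.swap (ii : ℕ) (jj : ℕ)) := SInf_mul_swap hw hin
        set w' := w * Equiv.swap (ii : ℕ) (jj : ℕ) with hw'def
        have hwn' : ∃ k, n ≤ k ∧ w' k ≠ k := by
          obtain ⟨k, hk, hkne⟩ := hwn
          refine ⟨k, hk, ?_⟩
          rw [hw'def, Equiv.Perm.mul_apply,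
            Equiv.swap_apply_of_ne_of_ne (by show k ≠ i; omega) (by show k ≠ i + 1; omega)]
          exact hkne
        have hww : w' * Equiv.swap (ii : ℕ) (jj : ℕ) = w := by
          rw [hw'def, mul_assoc, Equiv.swap_mul_self, mul_one]
        have hlen : permLenN (w' * Equiv.swap (ii : ℕ) (jj : ℕ)) < permLenN w' := by
          rw [hww]
          exact permLenN_lt hw.1 hasc
        have heq := hrec w' hw' ii jj hji hlen
        rw [hww] at heq
        have hA' : ascCard n w' < ascCard n w := ascCard_lt ii jj hji hasc
        have hg : 𝔖 w' ∈ symIdeal n := ih w' hw' hwn' (by omega)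
        obtain ⟨h, hI, hhe⟩ := exists_quot ii jj hg
        rw [hhe] at heq
        have hne : (X ii - X jj : MvPolynomial (Fin n) ℤ) ≠ 0 := by
          apply sub_ne_zero.mpr
          intro hXX
          have h2 := MvPolynomial.X_injective hXX
          rw [hiidef, hjjdef] at h2
          have := Fin.mk.injEq i (by omega : i < n) (i + 1) hin ▸ h2
          simp [Fin.mk.injEq] at h2
        have hcancel := mul_left_cancel₀ hne heq
        rw [hcancel]
        exact hI
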